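/- Generalized conditional entropy inequality: Let A, X, Y be discrete random variables taking values in sets 𝒜, 𝒳, 𝒴, with joint probability mass function P_{A,X,Y}. Define m = sup over (x,y) ∈ 𝒳 × 𝒴 of the cardinality of {a ∈ 𝒜 : P_{A,X}(a,x) · P_{A,Y}(a,y) > 0}. Then H(A | X) + H(A | Y) ≤ H(A) + log m. -/

import Mathlib

/-- The Shannon entropy (in nats) of the discrete random variable `X` defined on the
finite probability space `(Ω, μ)`, with the convention `0 · log 0 = 0`
(automatic in Lean since `Real.log 0 = 0`). -/
noncomputable def entropy {Ω β : Type*} [Fintype Ω] [DecidableEq β]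
    (μ : Ω → ℝ) (X : Ω → β) : ℝ :=
  -∑ b ∈ Finset.univ.image X,
      ((∑ ω ∈ Finset.univ.filter (fun ω => X ω = b), μ ω) *
        Real.log (∑ ω ∈ Finset.univ.filter (fun ω => X ω = b), μ ω))

/-- The conditional Shannon entropy `H(A | X) = H(A, X) - H(X)`. -/
noncomputable def condEntropy {Ω α β : Type*} [Fintype Ω] [DecidableEq α] [DecidableEq β]
    (μ : Ω → ℝ) (A : Ω → α) (X : Ω → β) : ℝ :=
  entropy μ (fun ω => (A ω, X ω)) - entropy μ X

/-- The joint probability mass function of the pair `(A, X)`: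
`P_{A,X}(a, x) = μ {ω | A ω = a ∧ X ω = x}`. -/
noncomputable def jointPMF {Ω α β : Type*} [Fintype Ω] [DecidableEq α] [DecidableEq β]
    (μ : Ω → ℝ) (A : Ω → α) (X : Ω → β) (a : α) (x : β) : ℝ :=
  ∑ ω ∈ Finset.univ.filter (fun ω => A ω = a ∧ X ω = x), μ ω

/-- The marginal pmf of a single random variable. -/
noncomputable def margPMF {Ω β : Type*} [Fintype Ω] [DecidableEq β]
    (μ : Ω → ℝ) (X : Ω → β) (b : β) : ℝ :=
  ∑ ω ∈ Finset.univ.filter (fun ω => X ω = b), μ ω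

section Aux

variable {Ω α β : Type*} [Fintype Ω] [DecidableEq α] [DecidableEq β]

lemma entropy_eq (μ : Ω → ℝ) (X : Ω → β) [Fintype β] :
    entropy μ X = -∑ b : β, margPMF μ X b * Real.log (margPMF μ X b) := by
  unfold entropy margPMF
  congr 1
  refine Finset.sum_subset (Finset.subset_univ _) ?_
  intro b _ hb
  have h : Finset.univ.filter (fun ω => X ω = b) = ∅ := by
    ext ω
    simp only [Finset.mem_filter, Finset.mem_univ, true_and, Finset.notMem_empty, iff_false]
    intro h
    exact hb (Finset.mem_image.mpr ⟨ω, Finset.mem_univ ω, h⟩)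
  simp [h]

lemma margPMF_nonneg (μ : Ω → ℝ) (hμ0 : ∀ ω, 0 ≤ μ ω) (X : Ω → β) (b : β) :
    0 ≤ margPMF μ X b :=
  Finset.sum_nonneg fun ω _ => hμ0 ω

lemma jointPMF_nonneg (μ : Ω → ℝ) (hμ0 : ∀ ω, 0 ≤ μ ω) (A : Ω → α) (X : Ω → β) (a : α) (x : β) :
    0 ≤ jointPMF μ A X a x :=
  Finset.sum_nonneg fun ω _ => hμ0 ω

lemma sum_jointPMF_right (μ : Ω → ℝ) (A : Ω → α) (X : Ω → β) [Fintype β] (a : α) :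
    ∑ x : β, jointPMF μ A X a x = margPMF μ A a := by
  unfold jointPMF margPMF
  simp_rw [Finset.sum_filter]
  rw [Finset.sum_comm]
  refine Finset.sum_congr rfl fun ω _ => ?_
  by_cases h : A ω = a <;> simp [h, Finset.sum_ite_eq]

lemma sum_jointPMF_left (μ : Ω → ℝ) (A : Ω → α) (X : Ω → β) [Fintype α] (x : β) :
    ∑ a : α, jointPMF μ A X a x = margPMF μ X x := by
  unfold jointPMF margPMF
  simp_rw [Finset.sum_filter]
  rw [Finset.sum_comm]
  refine Finset.sum_congr rfl fun ω _ => ?_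
  by_cases h : X ω = x <;> simp [h, Finset.sum_ite_eq]

lemma sum_margPMF (μ : Ω → ℝ) (X : Ω → β) [Fintype β] :
    ∑ b : β, margPMF μ X b = ∑ ω, μ ω := by
  unfold margPMF
  simp_rw [Finset.sum_filter]
  rw [Finset.sum_comm]
  refine Finset.sum_congr rfl fun ω _ => ?_
  simp [Finset.sum_ite_eq]

lemma entropy_pair (μ : Ω → ℝ) (A : Ω → α) (X : Ω → β) [Fintype α] [Fintype β] :
    entropy μ (fun ω => (A ω, X ω)) =
      -∑ a : α, ∑ x : β, jointPMF μ A X a x * Real.log (jointPMF μ A X a x) := by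
  rw [entropy_eq]
  rw [Fintype.sum_prod_type]
  have h : ∀ (a : α) (x : β),
      margPMF μ (fun ω => (A ω, X ω)) (a, x) = jointPMF μ A X a x := by
    intro a x
    unfold margPMF jointPMF
    congr 1
    apply Finset.filter_congr
    intro ω _
    simp [Prod.ext_iff]
  simp_rw [h]

lemma jointPMF_le_margA (μ : Ω → ℝ) (hμ0 : ∀ ω, 0 ≤ μ ω) (A : Ω → α) (X : Ω → β)
    [Fintype β] (a : α) (x : β) :
    jointPMF μ A X a x ≤ margPMF μ A a := by
  rw [← sum_jointPMF_right μ A X a]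
  exact Finset.single_le_sum (fun i _ => jointPMF_nonneg μ hμ0 A X a i) (Finset.mem_univ x)

lemma jointPMF_le_margX (μ : Ω → ℝ) (hμ0 : ∀ ω, 0 ≤ μ ω) (A : Ω → α) (X : Ω → β)
    [Fintype α] (a : α) (x : β) :
    jointPMF μ A X a x ≤ margPMF μ X x := by
  rw [← sum_jointPMF_left μ A X x]
  exact Finset.single_le_sum (fun i _ => jointPMF_nonneg μ hμ0 A X i x) (Finset.mem_univ a)

end Aux

/-- Main auxiliary lemma: the inequality with an abstract bound `m` on the number of
values of `A` compatible with any pair `(x, y)`. -/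
theorem gcei_aux {Ω 𝒜 𝒳 𝒴 : Type*} [Fintype Ω]
    [Fintype 𝒜] [Fintype 𝒳] [Fintype 𝒴]
    [DecidableEq 𝒜] [DecidableEq 𝒳] [DecidableEq 𝒴]
    (μ : Ω → ℝ) (hμ0 : ∀ ω, 0 ≤ μ ω) (hμ1 : ∑ ω, μ ω = 1)
    (A : Ω → 𝒜) (X : Ω → 𝒳) (Y : Ω → 𝒴) (m : ℕ) (hm1 : 1 ≤ m)
    (hcard : ∀ (x : 𝒳) (y : 𝒴) (s : Finset 𝒜),
      (∀ a ∈ s, 0 < jointPMF μ A X a x * jointPMF μ A Y a y) → s.card ≤ m) :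
    condEntropy μ A X + condEntropy μ A Y ≤ entropy μ A + Real.log (m : ℝ) := by
  classical
  set pA : 𝒜 → ℝ := margPMF μ A with hpA
  set pX : 𝒳 → ℝ := margPMF μ X with hpX
  set pY : 𝒴 → ℝ := margPMF μ Y with hpY
  set pAX : 𝒜 → 𝒳 → ℝ := jointPMF μ A X with hpAX
  set pAY : 𝒜 → 𝒴 → ℝ := jointPMF μ A Y with hpAY
  set M : ℝ := (m : ℝ) with hM
  have hpA_nn : ∀ a, 0 ≤ pA a := fun a => margPMF_nonneg μ hμ0 A a
  have hpX_nn : ∀ x, 0 ≤ pX x := fun x => margPMF_nonneg μ hμ0 X x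
  have hpY_nn : ∀ y, 0 ≤ pY y := fun y => margPMF_nonneg μ hμ0 Y y
  have hpAX_nn : ∀ a x, 0 ≤ pAX a x := fun a x => jointPMF_nonneg μ hμ0 A X a x
  have hpAY_nn : ∀ a y, 0 ≤ pAY a y := fun a y => jointPMF_nonneg μ hμ0 A Y a y
  have hM1 : (1 : ℝ) ≤ M := by rw [hM]; exact_mod_cast hm1
  have hMpos : 0 < M := lt_of_lt_of_le one_pos hM1
  -- the conditionally independent coupling
  set q : 𝒜 → 𝒳 → 𝒴 → ℝ := fun a x y => pAX a x * pAY a y / pA a with hq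
  have hq_nn : ∀ a x y, 0 ≤ q a x y := fun a x y =>
    div_nonneg (mul_nonneg (hpAX_nn a x) (hpAY_nn a y)) (hpA_nn a)
  have hpA0X : ∀ a x, pA a = 0 → pAX a x = 0 := by
    intro a x h
    have h1 := jointPMF_le_margA μ hμ0 A X a x
    rw [← hpAX, ← hpA, h] at h1
    exact le_antisymm h1 (hpAX_nn a x)
  have hpA0Y : ∀ a y, pA a = 0 → pAY a y = 0 := by
    intro a y h
    have h1 := jointPMF_le_margA μ hμ0 A Y a y
    rw [← hpAY, ← hpA, h] at h1
    exact le_antisymm h1 (hpAY_nn a y)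
  have hsum_pAX_x : ∀ a, ∑ x : 𝒳, pAX a x = pA a := fun a => sum_jointPMF_right μ A X a
  have hsum_pAY_y : ∀ a, ∑ y : 𝒴, pAY a y = pA a := fun a => sum_jointPMF_right μ A Y a
  have hsum_pAX_a : ∀ x, ∑ a : 𝒜, pAX a x = pX x := fun x => sum_jointPMF_left μ A X x
  have hsum_pAY_a : ∀ y, ∑ a : 𝒜, pAY a y = pY y := fun y => sum_jointPMF_left μ A Y y
  have hqy : ∀ a x, ∑ y : 𝒴, q a x y = pAX a x := by
    intro a x
    by_cases h : pA a = 0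
    · simp [hq, h, hpA0X a x h]
    · simp only [hq]
      rw [← Finset.sum_div, ← Finset.mul_sum, hsum_pAY_y a, mul_div_assoc, div_self h, mul_one]
  have hqx : ∀ a y, ∑ x : 𝒳, q a x y = pAY a y := by
    intro a y
    by_cases h : pA a = 0
    · simp [hq, h, hpA0Y a y h]
    · simp only [hq]
      rw [← Finset.sum_div, ← Finset.sum_mul, hsum_pAX_x a, mul_comm, mul_div_assoc, div_self h,
        mul_one]
  have hqxy : ∀ a, ∑ x : 𝒳, ∑ y : 𝒴, q a x y = pA a := by
    intro a
    simp_rw [hqy]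
    exact hsum_pAX_x a
  have hsum_pA : ∑ a : 𝒜, pA a = 1 := by
    rw [hpA, sum_margPMF μ A, hμ1]
  have hsum_pX : ∑ x : 𝒳, pX x = 1 := by
    rw [hpX, sum_margPMF μ X, hμ1]
  have hsum_pY : ∑ y : 𝒴, pY y = 1 := by
    rw [hpY, sum_margPMF μ Y, hμ1]
  have hq_total : ∑ a : 𝒜, ∑ x : 𝒳, ∑ y : 𝒴, q a x y = 1 := by
    simp_rw [hqxy]; exact hsum_pA
  set L : 𝒜 → 𝒳 → 𝒴 → ℝ := fun a x y =>
    Real.log (pA a) + Real.log (pX x) + Real.log (pY y)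
      - Real.log (pAX a x) - Real.log (pAY a y) with hL
  set S : ℝ := ∑ a : 𝒜, ∑ x : 𝒳, ∑ y : 𝒴, q a x y * L a x y with hS
  have hP1 : ∑ a : 𝒜, ∑ x : 𝒳, ∑ y : 𝒴, q a x y * Real.log (pA a)
      = ∑ a : 𝒜, pA a * Real.log (pA a) := by
    refine Finset.sum_congr rfl fun a _ => ?_
    simp_rw [← Finset.sum_mul]
    rw [hqxy a]
  have hP2 : ∑ a : 𝒜, ∑ x : 𝒳, ∑ y : 𝒴, q a x y * Real.log (pX x)
      = ∑ x : 𝒳, pX x * Real.log (pX x) := by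
    have step : ∀ a, ∑ x : 𝒳, ∑ y : 𝒴, q a x y * Real.log (pX x)
        = ∑ x : 𝒳, pAX a x * Real.log (pX x) := by
      intro a
      refine Finset.sum_congr rfl fun x _ => ?_
      rw [← Finset.sum_mul, hqy a x]
    simp_rw [step]
    rw [Finset.sum_comm]
    refine Finset.sum_congr rfl fun x _ => ?_
    rw [← Finset.sum_mul, hsum_pAX_a x]
  have hP3 : ∑ a : 𝒜, ∑ x : 𝒳, ∑ y : 𝒴, q a x y * Real.log (pY y)
      = ∑ y : 𝒴, pY y * Real.log (pY y) := by
    have step : ∀ a, ∑ x : 𝒳, ∑ y : 𝒴, q a x y * Real.log (pY y)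
        = ∑ y : 𝒴, pAY a y * Real.log (pY y) := by
      intro a
      rw [Finset.sum_comm]
      refine Finset.sum_congr rfl fun y _ => ?_
      rw [← Finset.sum_mul, hqx a y]
    simp_rw [step]
    rw [Finset.sum_comm]
    refine Finset.sum_congr rfl fun y _ => ?_
    rw [← Finset.sum_mul, hsum_pAY_a y]
  have hP4 : ∑ a : 𝒜, ∑ x : 𝒳, ∑ y : 𝒴, q a x y * Real.log (pAX a x)
      = ∑ a : 𝒜, ∑ x : 𝒳, pAX a x * Real.log (pAX a x) := by
    refine Finset.sum_congr rfl fun a _ => ?_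
    refine Finset.sum_congr rfl fun x _ => ?_
    rw [← Finset.sum_mul, hqy a x]
  have hP5 : ∑ a : 𝒜, ∑ x : 𝒳, ∑ y : 𝒴, q a x y * Real.log (pAY a y)
      = ∑ a : 𝒜, ∑ y : 𝒴, pAY a y * Real.log (pAY a y) := by
    refine Finset.sum_congr rfl fun a _ => ?_
    rw [Finset.sum_comm]
    refine Finset.sum_congr rfl fun y _ => ?_
    rw [← Finset.sum_mul, hqx a y]
  have hE : S = (∑ a : 𝒜, pA a * Real.log (pA a)) + (∑ x : 𝒳, pX x * Real.log (pX x))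
      + (∑ y : 𝒴, pY y * Real.log (pY y))
      - (∑ a : 𝒜, ∑ x : 𝒳, pAX a x * Real.log (pAX a x))
      - (∑ a : 𝒜, ∑ y : 𝒴, pAY a y * Real.log (pAY a y)) := by
    have expand : ∀ a x y, q a x y * L a x y
        = q a x y * Real.log (pA a) + q a x y * Real.log (pX x) + q a x y * Real.log (pY y)
          - q a x y * Real.log (pAX a x) - q a x y * Real.log (pAY a y) := by
      intro a x y
      have hLdef : L a x y = Real.log (pA a) + Real.log (pX x) + Real.log (pY y)
          - Real.log (pAX a x) - Real.log (pAY a y) := rfl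
      rw [hLdef]
      ring
    rw [hS]
    simp_rw [expand, Finset.sum_sub_distrib, Finset.sum_add_distrib]
    rw [hP1, hP2, hP3, hP4, hP5]
  set c : 𝒜 → 𝒳 → 𝒴 → ℝ := fun a x y => if 0 < pAX a x * pAY a y then (1 : ℝ) else 0 with hc
  have key : ∀ a x y, q a x y * L a x y ≤
      pX x * pY y * c a x y / M - q a x y + q a x y * Real.log M := by
    intro a x y
    by_cases hpos : 0 < pAX a x * pAY a y
    · have h1 : 0 < pAX a x := by
        rcases (hpAX_nn a x).lt_or_eq with h | h
        · exact h
        · exfalso; rw [← h, zero_mul] at hpos; exact lt_irrefl 0 hpos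
      have h2 : 0 < pAY a y := by
        rcases (hpAY_nn a y).lt_or_eq with h | h
        · exact h
        · exfalso; rw [← h, mul_zero] at hpos; exact lt_irrefl 0 hpos
      have hApos : 0 < pA a := by
        refine lt_of_lt_of_le h1 ?_
        have := jointPMF_le_margA μ hμ0 A X a x
        rwa [← hpAX, ← hpA] at this
      have hXpos : 0 < pX x := by
        refine lt_of_lt_of_le h1 ?_
        have := jointPMF_le_margX μ hμ0 A X a x
        rwa [← hpAX, ← hpX] at this
      have hYpos : 0 < pY y := by
        refine lt_of_lt_of_le h2 ?_
        have := jointPMF_le_margX μ hμ0 A Y a y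
        rwa [← hpAY, ← hpY] at this
      have hqpos : 0 < q a x y := div_pos (mul_pos h1 h2) hApos
      have hlogq : Real.log (q a x y)
          = Real.log (pAX a x) + Real.log (pAY a y) - Real.log (pA a) := by
        simp only [hq]
        rw [Real.log_div (by positivity) (ne_of_gt hApos),
          Real.log_mul (ne_of_gt h1) (ne_of_gt h2)]
      have hLrw : L a x y = Real.log (pX x * pY y / (q a x y * M)) + Real.log M := by
        rw [Real.log_div (by positivity) (by positivity),
          Real.log_mul (ne_of_gt hXpos) (ne_of_gt hYpos),
          Real.log_mul (ne_of_gt hqpos) (ne_of_gt hMpos), hlogq]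
        simp only [hL]
        ring
      have hlog_le : Real.log (pX x * pY y / (q a x y * M))
          ≤ pX x * pY y / (q a x y * M) - 1 :=
        Real.log_le_sub_one_of_pos (by positivity)
      have hmul : q a x y * (pX x * pY y / (q a x y * M) - 1)
          = pX x * pY y / M - q a x y := by
        field_simp
      have hc1 : c a x y = 1 := if_pos hpos
      rw [hLrw, hc1, mul_add]
      have hstep := mul_le_mul_of_nonneg_left hlog_le (le_of_lt hqpos)
      calc q a x y * Real.log (pX x * pY y / (q a x y * M)) + q a x y * Real.log M
          ≤ q a x y * (pX x * pY y / (q a x y * M) - 1) + q a x y * Real.log M := by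
            linarith
        _ = pX x * pY y * 1 / M - q a x y + q a x y * Real.log M := by
            rw [hmul]; ring
    · have hprod : pAX a x * pAY a y = 0 :=
        le_antisymm (not_lt.mp hpos) (mul_nonneg (hpAX_nn a x) (hpAY_nn a y))
      have hq0 : q a x y = 0 := by simp [hq, hprod]
      have hc0 : c a x y = 0 := if_neg hpos
      rw [hq0, hc0]
      simp
  have hcnt_le : ∀ x y, ∑ a : 𝒜, c a x y ≤ M := by
    intro x y
    have hcnt : ∑ a : 𝒜, c a x y
        = ((Finset.univ.filter fun a : 𝒜 => 0 < pAX a x * pAY a y).card : ℝ) := by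
      simp [hc, Finset.sum_boole]
    rw [hcnt, hM]
    have := hcard x y (Finset.univ.filter fun a : 𝒜 => 0 < pAX a x * pAY a y)
      (fun a ha => (Finset.mem_filter.mp ha).2)
    exact_mod_cast this
  have hT1 : ∑ a : 𝒜, ∑ x : 𝒳, ∑ y : 𝒴, pX x * pY y * c a x y / M ≤ 1 := by
    rw [Finset.sum_comm]
    have step : ∀ x : 𝒳, ∑ a : 𝒜, ∑ y : 𝒴, pX x * pY y * c a x y / M
        = ∑ y : 𝒴, pX x * pY y * (∑ a : 𝒜, c a x y) / M := by
      intro x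
      rw [Finset.sum_comm]
      refine Finset.sum_congr rfl fun y _ => ?_
      rw [← Finset.sum_div, ← Finset.mul_sum]
    simp_rw [step]
    have hle : ∀ x y, pX x * pY y * (∑ a : 𝒜, c a x y) / M ≤ pX x * pY y := by
      intro x y
      rw [div_le_iff₀ hMpos]
      have hnn : 0 ≤ pX x * pY y := mul_nonneg (hpX_nn x) (hpY_nn y)
      exact mul_le_mul_of_nonneg_left (hcnt_le x y) hnn
    calc ∑ x : 𝒳, ∑ y : 𝒴, pX x * pY y * (∑ a : 𝒜, c a x y) / M
        ≤ ∑ x : 𝒳, ∑ y : 𝒴, pX x * pY y :=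
          Finset.sum_le_sum fun x _ => Finset.sum_le_sum fun y _ => hle x y
      _ = (∑ x : 𝒳, pX x) * (∑ y : 𝒴, pY y) := by
          rw [← Finset.sum_mul_sum]
      _ = 1 := by rw [hsum_pX, hsum_pY, mul_one]
  have hSle : S ≤ Real.log M := by
    have h1 : S ≤ ∑ a : 𝒜, ∑ x : 𝒳, ∑ y : 𝒴,
        (pX x * pY y * c a x y / M - q a x y + q a x y * Real.log M) := by
      rw [hS]
      exact Finset.sum_le_sum fun a _ => Finset.sum_le_sum fun x _ =>
        Finset.sum_le_sum fun y _ => key a x y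
    have h2 : ∑ a : 𝒜, ∑ x : 𝒳, ∑ y : 𝒴,
        (pX x * pY y * c a x y / M - q a x y + q a x y * Real.log M)
        = (∑ a : 𝒜, ∑ x : 𝒳, ∑ y : 𝒴, pX x * pY y * c a x y / M)
          - (∑ a : 𝒜, ∑ x : 𝒳, ∑ y : 𝒴, q a x y)
          + (∑ a : 𝒜, ∑ x : 𝒳, ∑ y : 𝒴, q a x y) * Real.log M := by
      simp_rw [Finset.sum_add_distrib, Finset.sum_sub_distrib, Finset.sum_mul]
    rw [h2, hq_total] at h1
    calc S ≤ (∑ a : 𝒜, ∑ x : 𝒳, ∑ y : 𝒴, pX x * pY y * c a x y / M) - 1 + 1 * Real.log M :=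
        h1
      _ ≤ 1 - 1 + 1 * Real.log M := by linarith [hT1]
      _ = Real.log M := by ring
  unfold condEntropy
  rw [entropy_pair μ A X, entropy_pair μ A Y, entropy_eq μ A, entropy_eq μ X, entropy_eq μ Y]
  rw [← hpA, ← hpX, ← hpY, ← hpAX, ← hpAY]
  linarith [hSle, hE.le]

/-- **Generalized conditional entropy inequality.** With
`m = sup_{(x,y)} |{a : P_{A,X}(a,x) · P_{A,Y}(a,y) > 0}|`, one has
`H(A|X) + H(A|Y) ≤ H(A) + log m`. -/
theorem generalized_conditional_entropy_inequality {Ω 𝒜 𝒳 𝒴 : Type*} [Fintype Ω]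
    [Fintype 𝒜] [Fintype 𝒳] [Fintype 𝒴]
    [DecidableEq 𝒜] [DecidableEq 𝒳] [DecidableEq 𝒴]
    (μ : Ω → ℝ) (hμ0 : ∀ ω, 0 ≤ μ ω) (hμ1 : ∑ ω, μ ω = 1)
    (A : Ω → 𝒜) (X : Ω → 𝒳) (Y : Ω → 𝒴) :
    condEntropy μ A X + condEntropy μ A Y ≤
      entropy μ A +
        Real.log
          ((Finset.univ.sup fun p : 𝒳 × 𝒴 =>
            (Finset.univ.filter fun a : 𝒜 =>
              0 < jointPMF μ A X a p.1 * jointPMF μ A Y a p.2).card) : ℕ) := by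
  refine gcei_aux μ hμ0 hμ1 A X Y _ ?_ ?_
  · -- 1 ≤ m
    have hω : ∃ ω, 0 < μ ω := by
      by_contra h
      push_neg at h
      have : ∑ ω, μ ω = 0 :=
        Finset.sum_eq_zero fun ω _ => le_antisymm (h ω) (hμ0 ω)
      rw [this] at hμ1
      exact one_ne_zero hμ1.symm
    obtain ⟨ω₀, hω₀⟩ := hω
    have hx : 0 < jointPMF μ A X (A ω₀) (X ω₀) := by
      refine lt_of_lt_of_le hω₀ ?_
      refine Finset.single_le_sum (fun ω _ => hμ0 ω) ?_
      simp
    have hy : 0 < jointPMF μ A Y (A ω₀) (Y ω₀) := by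
      refine lt_of_lt_of_le hω₀ ?_
      refine Finset.single_le_sum (fun ω _ => hμ0 ω) ?_
      simp
    rw [Nat.one_le_iff_ne_zero]
    intro h
    rw [show (0:ℕ) = ⊥ from rfl, Finset.sup_eq_bot_iff] at h
    have h2 := h (X ω₀, Y ω₀) (Finset.mem_univ _)
    simp only [Nat.bot_eq_zero, Finset.card_eq_zero] at h2
    have h3 := Finset.eq_empty_iff_forall_notMem.mp h2 (A ω₀)
    rw [Finset.mem_filter] at h3
    exact h3 ⟨Finset.mem_univ _, mul_pos hx hy⟩
  · intro x y s hs
    refine le_trans ?_ (Finset.le_sup (Finset.mem_univ (x, y)))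
    refine Finset.card_le_card ?_
    intro a ha
    rw [Finset.mem_filter]
    exact ⟨Finset.mem_univ _, hs a ha⟩
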